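/- arXiv:1101.6033 — 2 statements merged into one kernel-verified Lean document; each statement's English description precedes it below -/
import Mathlib

section
/- Let F be a field and suppose a polynomial φ of degree D in F[x,y,z] factors as φ = P·Q where the top homogeneous components P_s of P and Q_t of Q are relatively prime, and suppose all homogeneous components of φ of degree strictly between e and D are zero, where e < t. Then for each r with 1 ≤ r < t, the homogeneous components P_{s−r} and Q_{t−r} are zero. -/
open MvPolynomial

private lemma hc_mul_homog {F : Type*} [Field F] {A f : MvPolynomial (Fin 3) F} {s : ℕ}
    (hA : A.IsHomogeneous s) (m : ℕ) :
    homogeneousComponent m (A * f) =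
      if s ≤ m then A * homogeneousComponent (m - s) f else 0 := by
  conv_lhs => rw [← sum_homogeneousComponent f, Finset.mul_sum, map_sum]
  have h1 : ∀ j ∈ Finset.range (f.totalDegree + 1),
      homogeneousComponent m (A * homogeneousComponent j f)
        = if j = m - s ∧ s ≤ m then A * homogeneousComponent j f else 0 := by
    intro j _
    rw [homogeneousComponent_of_mem ((hA.mul (homogeneousComponent_isHomogeneous j f)))]
    by_cases h : m = s + j
    · simp [h, Nat.le_add_right]
    · rw [if_neg h, if_neg]
      rintro ⟨rfl, hsm⟩
      omega
  rw [Finset.sum_congr rfl h1]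
  by_cases hsm : s ≤ m
  · simp only [hsm, and_true]
    rw [Finset.sum_ite_eq' (Finset.range (f.totalDegree + 1)) (m - s)
      (fun j => A * homogeneousComponent j f)]
    by_cases hmem : m - s ∈ Finset.range (f.totalDegree + 1)
    · rw [if_pos hmem]
      simp
    · rw [if_neg hmem]
      have hz : homogeneousComponent (m - s) f = 0 := by
        apply homogeneousComponent_eq_zero
        simp only [Finset.mem_range, not_lt] at hmem
        omega
      simp [hz]
  · rw [if_neg hsm]
    apply Finset.sum_eq_zero
    intro j _
    rw [if_neg (by tauto)]

theorem components_vanish (F : Type*) [Field F]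
    (P Q : MvPolynomial (Fin 3) F) (s t : ℕ) (hts : t ≤ s)
    (hPdeg : P.totalDegree = s) (hQdeg : Q.totalDegree = t)
    (hPs : homogeneousComponent s P ≠ 0) (hQt : homogeneousComponent t Q ≠ 0)
    (hcop : ∀ d : MvPolynomial (Fin 3) F,
      d ∣ homogeneousComponent s P → d ∣ homogeneousComponent t Q → IsUnit d)
    (hvanish : ∀ r, 1 ≤ r → r < t → homogeneousComponent (s + t - r) (P * Q) = 0) :
    ∀ r, 1 ≤ r → r < t →
      homogeneousComponent (s - r) P = 0 ∧ homogeneousComponent (t - r) Q = 0 := by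
  intro r
  induction r using Nat.strong_induction_on with
  | _ r IH =>
  intro hr1 hrt
  set A := homogeneousComponent s P with hA
  set B := homogeneousComponent t Q with hB
  have hAhom : A.IsHomogeneous s := homogeneousComponent_isHomogeneous s P
  have hBhom : B.IsHomogeneous t := homogeneousComponent_isHomogeneous t Q
  set P' := P - A with hP'
  set Q' := Q - B with hQ'
  -- total degree bounds on the truncated parts
  have hP'deg : P'.totalDegree ≤ s - r := by
    apply Finset.sup_le
    intro d hd
    by_contra hgt
    push_neg at hgt
    have hcp : coeff d P' ≠ 0 := mem_support_iff.mp hd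
    have hcA : coeff d A = if d.degree = s then coeff d P else 0 :=
      coeff_homogeneousComponent s P d
    have hdle : d.degree ≤ s := by
      by_contra hds
      push_neg at hds
      have : coeff d P = 0 := coeff_eq_zero_of_totalDegree_lt (by rw [hPdeg]; exact hds)
      apply hcp
      rw [hP', coeff_sub, this, hcA, this]
      simp
    have hdeq : d.degree = d.sum fun _ e => e := by
      simp [Finsupp.degree, Finsupp.sum]; rfl
    rw [← hdeq] at hgt
    by_cases hds : d.degree = s
    · apply hcp
      rw [hP', coeff_sub, hcA, if_pos hds, sub_self]
    · -- s - r < d.degree < s, so d.degree = s - k with 1 ≤ k < r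
      have hk1 : 1 ≤ s - d.degree := by omega
      have hk2 : s - d.degree < r := by omega
      have hz : homogeneousComponent (s - (s - d.degree)) P = 0 :=
        (IH _ hk2 hk1 (lt_trans hk2 hrt)).1
      have hzd : homogeneousComponent d.degree P = 0 := by
        rw [show d.degree = s - (s - d.degree) by omega]; exact hz
      have : coeff d P = 0 := by
        have := coeff_homogeneousComponent d.degree P d
        rw [hzd, if_pos rfl] at this
        simpa using this.symm
      apply hcp
      rw [hP', coeff_sub, this, hcA, this]
      simp
  have hQ'deg : Q'.totalDegree ≤ t - r := by
    apply Finset.sup_le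
    intro d hd
    by_contra hgt
    push_neg at hgt
    have hcp : coeff d Q' ≠ 0 := mem_support_iff.mp hd
    have hcB : coeff d B = if d.degree = t then coeff d Q else 0 :=
      coeff_homogeneousComponent t Q d
    have hdle : d.degree ≤ t := by
      by_contra hds
      push_neg at hds
      have : coeff d Q = 0 := coeff_eq_zero_of_totalDegree_lt (by rw [hQdeg]; exact hds)
      apply hcp
      rw [hQ', coeff_sub, this, hcB, this]
      simp
    have hdeq : d.degree = d.sum fun _ e => e := by
      simp [Finsupp.degree, Finsupp.sum]; rfl
    rw [← hdeq] at hgt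
    by_cases hds : d.degree = t
    · apply hcp
      rw [hQ', coeff_sub, hcB, if_pos hds, sub_self]
    · have hk1 : 1 ≤ t - d.degree := by omega
      have hk2 : t - d.degree < r := by omega
      have hz : homogeneousComponent (t - (t - d.degree)) Q = 0 :=
        (IH _ hk2 hk1 (lt_trans hk2 hrt)).2
      have hzd : homogeneousComponent d.degree Q = 0 := by
        rw [show d.degree = t - (t - d.degree) by omega]; exact hz
      have : coeff d Q = 0 := by
        have := coeff_homogeneousComponent d.degree Q d
        rw [hzd, if_pos rfl] at this
        simpa using this.symm
      apply hcp
      rw [hQ', coeff_sub, this, hcB, this]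
      simp
  -- decompose the product
  have hsplit : P * Q = A * B + A * Q' + B * P' + P' * Q' := by
    rw [hP', hQ']; ring
  have hrs : r ≤ s := le_trans (le_of_lt hrt) hts
  have hrt' : r ≤ t := le_of_lt hrt
  -- compute the homogeneous component of degree s + t - r
  have hc1 : homogeneousComponent (s + t - r) (A * B) = 0 := by
    rw [homogeneousComponent_of_mem (hAhom.mul hBhom), if_neg (by omega)]
  have hc2 : homogeneousComponent (s + t - r) (A * Q') = A * homogeneousComponent (t - r) Q' := by
    rw [hc_mul_homog hAhom, if_pos (by omega), show s + t - r - s = t - r from by omega]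
  have hc3 : homogeneousComponent (s + t - r) (B * P') = B * homogeneousComponent (s - r) P' := by
    rw [hc_mul_homog hBhom, if_pos (by omega), show s + t - r - t = s - r from by omega]
  have hc4 : homogeneousComponent (s + t - r) (P' * Q') = 0 := by
    apply homogeneousComponent_eq_zero
    calc (P' * Q').totalDegree ≤ P'.totalDegree + Q'.totalDegree := totalDegree_mul _ _
      _ ≤ (s - r) + (t - r) := add_le_add hP'deg hQ'deg
      _ < s + t - r := by omega
  -- component of the truncations equals component of the originals
  have hcompP : homogeneousComponent (s - r) P' = homogeneousComponent (s - r) P := by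
    rw [hP', map_sub, homogeneousComponent_of_mem (homogeneousComponent_mem s P),
      if_neg (by omega), sub_zero]
  have hcompQ : homogeneousComponent (t - r) Q' = homogeneousComponent (t - r) Q := by
    rw [hQ', map_sub, homogeneousComponent_of_mem (homogeneousComponent_mem t Q),
      if_neg (by omega), sub_zero]
  have hkey : A * homogeneousComponent (t - r) Q + B * homogeneousComponent (s - r) P = 0 := by
    have := hvanish r hr1 hrt
    rw [hsplit] at this
    rw [map_add, map_add, map_add, hc1, hc2, hc3, hc4, hcompP, hcompQ] at this
    linear_combination this
  -- coprimality step
  have hrel : IsRelPrime A B := fun d hdA hdB => hcop d hdA hdB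
  have hdvd : A ∣ homogeneousComponent (s - r) P := by
    have h1 : A ∣ B * homogeneousComponent (s - r) P := by
      refine ⟨-(homogeneousComponent (t - r) Q), ?_⟩
      linear_combination hkey
    rw [mul_comm] at h1
    exact hrel.dvd_of_dvd_mul_right h1
  have hPzero : homogeneousComponent (s - r) P = 0 := by
    by_contra hne
    obtain ⟨c, hc⟩ := hdvd
    have hcne : c ≠ 0 := by
      rintro rfl
      rw [mul_zero] at hc
      exact hne hc
    -- homogeneousComponent (s - r) of A * c is 0 since all components have degree ≥ s > s - r
    have : homogeneousComponent (s - r) (A * c) = 0 := by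
      rw [hc_mul_homog hAhom, if_neg (by omega)]
    rw [← hc] at this
    rw [homogeneousComponent_of_mem (homogeneousComponent_mem (s - r) P), if_pos rfl] at this
    exact hne this
  have hQzero : homogeneousComponent (t - r) Q = 0 := by
    rw [hPzero, mul_zero, add_zero, mul_eq_zero] at hkey
    tauto
  exact ⟨hPzero, hQzero⟩
end

section
/- Let F be a field and P_s, Q_t nonzero coprime homogeneous polynomials in F[x,y,z] of degrees s ≥ t ≥ 1. Suppose P = P_s + P_{s−1} + … + P_0 and Q = Q_t + … + Q_0 with PQ having zero homogeneous components in all degrees s+t−1, s+t−2, …, s. Then Q is homogeneous (Q = Q_t). -/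
open MvPolynomial Finset

section Aux

variable {σ : Type*} {R : Type*} [CommSemiring R]

private theorem sum_hc_range' (p : MvPolynomial σ R) {N : ℕ} (hN : p.totalDegree < N) :
    (∑ i ∈ range N, homogeneousComponent i p) = p := by
  conv_rhs => rw [← sum_homogeneousComponent p]
  refine (Finset.sum_subset (fun i hi => ?_) (fun i hi1 hi2 => ?_)).symm
  · simp only [mem_range] at *
    omega
  · simp only [mem_range, not_lt] at hi2
    exact homogeneousComponent_eq_zero i p (Nat.lt_of_succ_le hi2)

private theorem hc_mul' (p q : MvPolynomial σ R) (n : ℕ) :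
    homogeneousComponent n (p * q) =
      ∑ ij ∈ Finset.HasAntidiagonal.antidiagonal n,
        homogeneousComponent ij.1 p * homogeneousComponent ij.2 q := by
  set N := max p.totalDegree q.totalDegree + n + 1 with hN
  have hp : p.totalDegree < N := by omega
  have hq : q.totalDegree < N := by omega
  conv_lhs => rw [← sum_hc_range' p hp, ← sum_hc_range' q hq]
  rw [Finset.sum_mul_sum, ← Finset.sum_product', map_sum]
  have key : ∀ ij : ℕ × ℕ,
      homogeneousComponent n (homogeneousComponent ij.1 p * homogeneousComponent ij.2 q)
        = if ij.1 + ij.2 = n then homogeneousComponent ij.1 p * homogeneousComponent ij.2 q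
          else 0 := by
    intro ij
    have hmem : homogeneousComponent ij.1 p * homogeneousComponent ij.2 q
        ∈ homogeneousSubmodule σ R (ij.1 + ij.2) := by
      rw [mem_homogeneousSubmodule]
      exact (homogeneousComponent_isHomogeneous ij.1 p).mul
        (homogeneousComponent_isHomogeneous ij.2 q)
    rw [homogeneousComponent_of_mem hmem]
    simp only [eq_comm]
  rw [Finset.sum_congr rfl fun ij _ => key ij, ← Finset.sum_filter]
  have hnN : n < N := by omega
  apply Finset.sum_congr ?_ fun _ _ => rfl
  ext ⟨a, b⟩
  simp only [Finset.mem_filter, Finset.mem_product, mem_range, Finset.HasAntidiagonal.mem_antidiagonal]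
  omega

/-- The top homogeneous component of a nonzero polynomial is nonzero. -/
private theorem hc_top_ne_zero' {p : MvPolynomial σ R} (hp : p ≠ 0) :
    homogeneousComponent p.totalDegree p ≠ 0 := by
  obtain ⟨d, hd, hdeg⟩ := Finset.exists_mem_eq_sup p.support
    (support_nonempty.mpr hp) (fun s => s.sum fun _ e => e)
  intro h
  have hc : coeff d (homogeneousComponent p.totalDegree p) = coeff d p := by
    rw [coeff_homogeneousComponent, if_pos]
    show d.degree = p.totalDegree
    rw [totalDegree, hdeg, Finsupp.degree, Finsupp.sum]
    rfl
  rw [h, coeff_zero] at hc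
  exact mem_support_iff.mp hd hc.symm

end Aux

section Domain

variable {σ : Type*} {R : Type*} [CommRing R] [IsDomain R]

private theorem totalDegree_mul_eq' {p q : MvPolynomial σ R} (hp : p ≠ 0) (hq : q ≠ 0) :
    (p * q).totalDegree = p.totalDegree + q.totalDegree := by
  refine le_antisymm (totalDegree_mul p q) ?_
  by_contra hlt
  push_neg at hlt
  have h0 : homogeneousComponent (p.totalDegree + q.totalDegree) (p * q) = 0 :=
    homogeneousComponent_eq_zero _ _ hlt
  rw [hc_mul'] at h0
  have hsingle : ∑ ij ∈ Finset.HasAntidiagonal.antidiagonal (p.totalDegree + q.totalDegree),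
      homogeneousComponent ij.1 p * homogeneousComponent ij.2 q
      = homogeneousComponent p.totalDegree p * homogeneousComponent q.totalDegree q := by
    apply Finset.sum_eq_single_of_mem (p.totalDegree, q.totalDegree)
      (Finset.HasAntidiagonal.mem_antidiagonal.mpr rfl)
    rintro ⟨a, b⟩ hab hne
    rw [Finset.HasAntidiagonal.mem_antidiagonal] at hab
    rcases lt_or_ge p.totalDegree a with h | h
    · rw [homogeneousComponent_eq_zero a p h, zero_mul]
    · have hb : q.totalDegree < b ∨ (a = p.totalDegree ∧ b = q.totalDegree) := by omega
      rcases hb with hb | ⟨rfl, rfl⟩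
      · rw [homogeneousComponent_eq_zero b q hb, mul_zero]
      · exact absurd rfl hne
  rw [hsingle] at h0
  exact mul_ne_zero (hc_top_ne_zero' hp) (hc_top_ne_zero' hq) h0

private theorem totalDegree_le_of_dvd' {p q : MvPolynomial σ R} (h : p ∣ q) (hq : q ≠ 0) :
    p.totalDegree ≤ q.totalDegree := by
  obtain ⟨c, rfl⟩ := h
  have hp : p ≠ 0 := fun h => hq (by rw [h, zero_mul])
  have hc : c ≠ 0 := fun h => hq (by rw [h, mul_zero])
  rw [totalDegree_mul_eq' hp hc]
  omega

end Domain

theorem Q_homogeneous (F : Type*) [Field F]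
    (P Q : MvPolynomial (Fin 3) F) (s t : ℕ) (hts : t ≤ s) (ht : 1 ≤ t)
    (hPdeg : P.totalDegree = s) (hQdeg : Q.totalDegree = t)
    (hPs : homogeneousComponent s P ≠ 0) (hQt : homogeneousComponent t Q ≠ 0)
    (hcop : ∀ d : MvPolynomial (Fin 3) F,
      d ∣ homogeneousComponent s P → d ∣ homogeneousComponent t Q → IsUnit d)
    (hvanish : ∀ r, s ≤ r → r < s + t → homogeneousComponent r (P * Q) = 0) :
    Q = homogeneousComponent t Q := by
  have hrel : IsRelPrime (homogeneousComponent s P) (homogeneousComponent t Q) :=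
    fun d h1 h2 => hcop d h1 h2
  have hQtdeg : (homogeneousComponent t Q).totalDegree = t :=
    (homogeneousComponent_isHomogeneous t Q).totalDegree hQt
  -- key induction: all lower homogeneous components of Q vanish
  have key : ∀ i k : ℕ, t = k + i → 0 < i → homogeneousComponent k Q = 0 := by
    intro i
    induction i using Nat.strong_induction_on with
    | _ i IH =>
      intro k hk hipos
      have hr := hvanish (s + k) (Nat.le_add_right s k) (by omega)
      rw [hc_mul'] at hr
      have hsum : ∑ ij ∈ Finset.HasAntidiagonal.antidiagonal (s + k),
          homogeneousComponent ij.1 P * homogeneousComponent ij.2 Q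
          = homogeneousComponent s P * homogeneousComponent k Q
            + homogeneousComponent (s + k - t) P * homogeneousComponent t Q := by
        apply Finset.sum_eq_add_of_mem (s, k) (s + k - t, t)
          (Finset.HasAntidiagonal.mem_antidiagonal.mpr rfl)
          (Finset.HasAntidiagonal.mem_antidiagonal.mpr (by omega))
          (by intro hh; have := congrArg Prod.snd hh; simp only at this; omega)
        rintro ⟨a, b⟩ hab ⟨hne1, hne2⟩
        rw [Finset.HasAntidiagonal.mem_antidiagonal] at hab
        rcases lt_or_ge s a with h | h
        · rw [homogeneousComponent_eq_zero a P (hPdeg ▸ h), zero_mul]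
        · have hbk : k ≤ b := by omega
          rcases lt_or_ge t b with h' | h'
          · rw [homogeneousComponent_eq_zero b Q (hQdeg ▸ h'), mul_zero]
          · -- k ≤ b ≤ t, b ≠ k (else (a,b) = (s,k)), b ≠ t (else (a,b) = (s+k-t,t))
            have hbk' : b ≠ k := fun hbe => hne1 (by simp only [Prod.mk.injEq]; omega)
            have hbt : b ≠ t := fun hbe => hne2 (by simp only [Prod.mk.injEq]; omega)
            rw [IH (t - b) (by omega) b (by omega) (by omega), mul_zero]
      rw [hsum] at hr
      have heq : homogeneousComponent s P * homogeneousComponent k Q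
          = -(homogeneousComponent (s + k - t) P * homogeneousComponent t Q) :=
        eq_neg_of_add_eq_zero_left hr
      have hdvd : homogeneousComponent t Q ∣
          homogeneousComponent s P * homogeneousComponent k Q := by
        rw [heq]
        exact dvd_neg.mpr (dvd_mul_left _ _)
      have hQk : homogeneousComponent t Q ∣ homogeneousComponent k Q :=
        hrel.symm.dvd_of_dvd_mul_left hdvd
      by_contra hne
      have h1 : (homogeneousComponent k Q).totalDegree ≤ k :=
        (homogeneousComponent_isHomogeneous k Q).totalDegree_le
      have h2 := totalDegree_le_of_dvd' hQk hne
      rw [hQtdeg] at h2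
      omega
  conv_lhs => rw [← sum_homogeneousComponent Q, hQdeg]
  refine Finset.sum_eq_single_of_mem t (by simp) fun j hj hne => ?_
  exact key (t - j) j (by simp at hj; omega) (by simp at hj; omega)
end
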